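/- arXiv:1908.06090 — 2 statements merged into one kernel-verified Lean document; each statement's English description precedes it below -/
import Mathlib

section
/- Let v ≥ 2, let f : {1,…,v} → ℝ^{v-1} be the effects coding, and let N = ((v-1)/2)(I − (1/v)J). Then for all i ≠ j, (f(i) − f(j))ᵀ N (f(i) − f(j)) = v − 1. -/
open Matrix

theorem stmt5 (v : ℕ) (hv : 2 ≤ v)
    (f : Fin v → (Fin (v-1) → ℝ))
    (hf : ∀ i j, f i j = if (i:ℕ) = v - 1 then -1 else if (i:ℕ) = (j:ℕ) then 1 else 0)
    (N : Matrix (Fin (v-1)) (Fin (v-1)) ℝ)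
    (hN : N = (((v:ℝ)-1)/2) •
        ((1 : Matrix (Fin (v-1)) (Fin (v-1)) ℝ) - ((1:ℝ)/(v:ℝ)) • Matrix.of (fun _ _ => (1:ℝ)))) :
    ∀ i j : Fin v, i ≠ j →
      (f i - f j) ⬝ᵥ (N *ᵥ (f i - f j)) = (v:ℝ) - 1 := by
  have hv0 : (v:ℝ) ≠ 0 := by positivity
  have key : ∀ (d : Fin (v-1) → ℝ), d ⬝ᵥ (N *ᵥ d) =
      (((v:ℝ)-1)/2) * ((∑ k, d k * d k) - (1/v) * ((∑ k, d k) * (∑ k, d k))) := by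
    intro d
    subst hN
    simp only [dotProduct, mulVec, Matrix.smul_apply, Matrix.sub_apply, Matrix.one_apply,
      Matrix.of_apply, dotProduct, smul_eq_mul]
    have step : ∀ x : Fin (v-1),
        d x * ∑ y, (((v:ℝ)-1)/2) * ((if x = y then (1:ℝ) else 0) - 1/(v:ℝ) * 1) * d y
        = (((v:ℝ)-1)/2) * (d x * d x) - (((v:ℝ)-1)/2) * (1/(v:ℝ)) * (d x * ∑ l, d l) := by
      intro x
      have h1 : (∑ y, (((v:ℝ)-1)/2) * ((if x = y then (1:ℝ) else 0) - 1/(v:ℝ) * 1) * d y)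
          = (((v:ℝ)-1)/2) * (d x - (1/(v:ℝ)) * ∑ l, d l) := by
        rw [show (fun y => (((v:ℝ)-1)/2) * ((if x = y then (1:ℝ) else 0) - 1/(v:ℝ) * 1) * d y)
            = fun y => (if y = x then (((v:ℝ)-1)/2) * d y else 0)
                - (((v:ℝ)-1)/2) * ((1/(v:ℝ)) * d y) by
          funext y
          by_cases h : x = y
          · subst h; rw [if_pos rfl, if_pos rfl]; ring
          · rw [if_neg h, if_neg (fun hh => h hh.symm)]; ring]
        rw [Finset.sum_sub_distrib, Finset.sum_ite_eq', ← Finset.mul_sum, ← Finset.mul_sum]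
        simp only [Finset.mem_univ, if_true]
        ring
      rw [h1]; ring
    rw [Finset.sum_congr rfl (fun x _ => step x), Finset.sum_sub_distrib,
      ← Finset.mul_sum, ← Finset.mul_sum, ← Finset.sum_mul]
    ring
  intro i j hij
  rw [key]
  set d : Fin (v-1) → ℝ := fun k => f i k - f j k with hd
  have hdd : (f i - f j) = d := rfl
  have hvc : ((v - 1 : ℕ) : ℝ) = (v:ℝ) - 1 := by
    push_cast [Nat.cast_sub (by omega : 1 ≤ v)]; ring
  have hsum : ∀ p : Fin v, (∑ k, f p k) = if (p:ℕ) = v - 1 then -((v:ℝ)-1) else 1 := by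
    intro p
    by_cases hp : (p:ℕ) = v - 1
    · simp only [if_pos hp]
      rw [Finset.sum_congr rfl (fun k _ => by rw [hf, if_pos hp]),
        Finset.sum_const, Finset.card_univ, Fintype.card_fin]
      simp [hvc]
    · have hlt : (p:ℕ) < v - 1 := lt_of_le_of_ne (by omega) hp
      rw [if_neg hp]
      have : (∑ k : Fin (v-1), f p k) = ∑ k : Fin (v-1), (if k = ⟨p, hlt⟩ then (1:ℝ) else 0) := by
        refine Finset.sum_congr rfl (fun k _ => ?_)
        rw [hf, if_neg hp]
        by_cases h : (p:ℕ) = (k:ℕ)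
        · rw [if_pos h, if_pos (by exact Fin.ext h.symm)]
        · rw [if_neg h, if_neg (fun hh => h (by rw [hh]))]
      rw [this, Finset.sum_ite_eq']
      simp
  have hsq : ∀ p q : Fin v, (∑ k, f p k * f q k) =
      if (p:ℕ) = v - 1 then (if (q:ℕ) = v-1 then (v:ℝ)-1 else -1)
      else if (q:ℕ) = v - 1 then -1 else (if (p:ℕ) = (q:ℕ) then 1 else 0) := by
    intro p q
    by_cases hp : (p:ℕ) = v - 1
    · by_cases hq : (q:ℕ) = v - 1
      · rw [if_pos hp, if_pos hq,
          Finset.sum_congr rfl (fun k _ => by rw [hf p, hf q, if_pos hp, if_pos hq]),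
          Finset.sum_const, Finset.card_univ, Fintype.card_fin]
        simp [hvc]
      · rw [if_pos hp, if_neg hq]
        have : (∑ k, f p k * f q k) = -∑ k, f q k := by
          rw [← Finset.sum_neg_distrib]
          refine Finset.sum_congr rfl (fun k _ => ?_)
          rw [hf p, if_pos hp]; ring
        rw [this, hsum, if_neg hq]
    · by_cases hq : (q:ℕ) = v - 1
      · rw [if_neg hp, if_pos hq]
        have : (∑ k, f p k * f q k) = -∑ k, f p k := by
          rw [← Finset.sum_neg_distrib]
          refine Finset.sum_congr rfl (fun k _ => ?_)
          rw [hf q, if_pos hq]; ring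
        rw [this, hsum, if_neg hp]
      · rw [if_neg hp, if_neg hq]
        have hpl : (p:ℕ) < v - 1 := lt_of_le_of_ne (by omega) hp
        have : (∑ k, f p k * f q k) =
            ∑ k : Fin (v-1), (if k = ⟨p, hpl⟩ then f q k else 0) := by
          refine Finset.sum_congr rfl (fun k _ => ?_)
          rw [hf p, if_neg hp]
          by_cases h : (p:ℕ) = (k:ℕ)
          · rw [if_pos h, if_pos (Fin.ext h.symm)]; ring
          · rw [if_neg h, if_neg (fun hh => h (by rw [hh]))]; ring
        rw [this, Finset.sum_ite_eq']
        simp only [Finset.mem_univ, if_true]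
        rw [hf q, if_neg hq]
        by_cases h : (p:ℕ) = (q:ℕ)
        · rw [if_pos h, if_pos (by simpa using h.symm)]
        · rw [if_neg h, if_neg (by simpa using fun hh => h hh.symm)]
  have hdsum : (∑ k, d k) = (∑ k, f i k) - (∑ k, f j k) := by
    rw [← Finset.sum_sub_distrib]
  have hddsum : (∑ k, d k * d k) = (∑ k, f i k * f i k) - 2 * (∑ k, f i k * f j k) + (∑ k, f j k * f j k) := by
    rw [Finset.mul_sum, ← Finset.sum_sub_distrib, ← Finset.sum_add_distrib]
    refine Finset.sum_congr rfl (fun k _ => ?_)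
    simp only [hd]; ring
  have hij' : (i:ℕ) ≠ (j:ℕ) := fun h => hij (Fin.ext h)
  rw [hdd, hdsum, hddsum, hsum, hsum, hsq, hsq, hsq]
  by_cases hi : (i:ℕ) = v - 1 <;> by_cases hj : (j:ℕ) = v - 1
  · omega
  · simp only [if_pos hi, if_neg hj]
    field_simp
    simp only [if_true]; ring
  · simp only [if_neg hi, if_pos hj]
    field_simp
    norm_num
    ring
  · simp only [if_neg hi, if_neg hj, if_neg hij', if_neg (fun h => hij' (by omega) : ¬(j:ℕ)=(i:ℕ))]
    field_simp
    norm_num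
    ring
end

section
/- Let f : ℝ → ℝ be a polynomial of degree exactly 3 with positive leading coefficient, let p ∈ ℝ and S ∈ ℕ with S ≥ 3. Suppose f(d) ≤ p for every integer d with 1 ≤ d ≤ S, and suppose there are integers 1 ≤ d₁ < d₂ < d₃ ≤ S with f(d₁) = f(d₂) = f(d₃) = p. Then d₂ = d₁ + 1 and d₃ = S. -/
open Polynomial

theorem stmt15 (f : Polynomial ℝ) (hdeg : f.degree = 3) (hlead : 0 < f.leadingCoeff)
    (p : ℝ) (S : ℕ) (hS : 3 ≤ S)
    (hle : ∀ d : ℤ, 1 ≤ d → d ≤ (S:ℤ) → f.eval (d:ℝ) ≤ p)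
    (d₁ d₂ d₃ : ℤ) (h1 : 1 ≤ d₁) (h12 : d₁ < d₂) (h23 : d₂ < d₃) (h3S : d₃ ≤ (S:ℤ))
    (he1 : f.eval (d₁:ℝ) = p) (he2 : f.eval (d₂:ℝ) = p) (he3 : f.eval (d₃:ℝ) = p) :
    d₂ = d₁ + 1 ∧ d₃ = (S:ℤ) := by
  set a := f.leadingCoeff with ha
  set g : Polynomial ℝ := f - Polynomial.C p with hg
  set q : Polynomial ℝ := (X - C (d₁:ℝ)) * (X - C (d₂:ℝ)) * (X - C (d₃:ℝ)) with hq
  have hd12 : (d₁:ℝ) < d₂ := by exact_mod_cast h12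
  have hd23 : (d₂:ℝ) < d₃ := by exact_mod_cast h23
  have hCp : (C p).degree < f.degree := by
    rw [hdeg]; exact lt_of_le_of_lt (degree_C_le) (by norm_num)
  have hgdeg : g.degree = 3 := by
    rw [hg, degree_sub_eq_left_of_degree_lt hCp, hdeg]
  have hglead : g.leadingCoeff = a := by
    rw [hg, leadingCoeff_sub_of_degree_lt hCp]
  have hqmonic : q.Monic :=
    ((monic_X_sub_C _).mul (monic_X_sub_C _)).mul (monic_X_sub_C _)
  have hqdeg : q.degree = 3 := by
    rw [hq]
    rw [degree_mul, degree_mul, degree_X_sub_C, degree_X_sub_C, degree_X_sub_C]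
    rfl
  have hane : a ≠ 0 := ne_of_gt hlead
  have hCaq_deg : (C a * q).degree = 3 := by
    rw [degree_C_mul hane, hqdeg]
  have hCaq_lead : (C a * q).leadingCoeff = a := by
    rw [leadingCoeff_mul, leadingCoeff_C, hqmonic.leadingCoeff, mul_one]
  have hgne : g ≠ 0 := by
    intro h0; rw [h0] at hgdeg; simp at hgdeg
  have hsub : (g - C a * q).degree < 3 := by
    have hd : g.degree = (C a * q).degree := by rw [hgdeg, hCaq_deg]
    have hl : g.leadingCoeff = (C a * q).leadingCoeff := by rw [hglead, hCaq_lead]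
    have := degree_sub_lt hd hgne hl
    rwa [hgdeg] at this
  have hzero : g - C a * q = 0 := by
    by_cases h0 : g - C a * q = 0
    · exact h0
    · apply Polynomial.eq_zero_of_natDegree_lt_card_of_eval_eq_zero'
        (g - C a * q) ({(d₁:ℝ), (d₂:ℝ), (d₃:ℝ)} : Finset ℝ)
      · intro i hi
        simp only [Finset.mem_insert, Finset.mem_singleton] at hi
        rcases hi with rfl | rfl | rfl <;>
          simp [hg, hq, eval_mul, eval_sub, he1, he2, he3]
      · have hcard : ({(d₁:ℝ), (d₂:ℝ), (d₃:ℝ)} : Finset ℝ).card = 3 := by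
          rw [Finset.card_insert_of_notMem, Finset.card_insert_of_notMem,
            Finset.card_singleton]
          · simp only [Finset.mem_singleton]; exact ne_of_lt hd23
          · simp only [Finset.mem_insert, Finset.mem_singleton]
            push_neg
            exact ⟨ne_of_lt hd12, ne_of_lt (hd12.trans hd23)⟩
        rw [hcard]
        exact_mod_cast (natDegree_lt_iff_degree_lt h0).mpr (by exact_mod_cast hsub)
  have key : ∀ x : ℝ, f.eval x = p + a * ((x - d₁) * (x - d₂) * (x - d₃)) := by
    intro x
    have := sub_eq_zero.mp hzero
    have hev := congrArg (Polynomial.eval x) this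
    simp only [hg, hq, eval_sub, eval_mul, eval_C, eval_X] at hev
    linarith
  constructor
  · by_contra hne
    have h12' : d₁ + 1 < d₂ := lt_of_le_of_ne h12 (fun h => hne h.symm)
    have hle' := hle (d₁ + 1) (by omega) (by omega)
    have hx12 : ((d₁ + 1 : ℤ) : ℝ) < d₂ := by exact_mod_cast h12'
    have hkey := key ((d₁ + 1 : ℤ) : ℝ)
    have hpos : 0 < a * ((((d₁+1:ℤ):ℝ) - d₁) * (((d₁+1:ℤ):ℝ) - d₂) * (((d₁+1:ℤ):ℝ) - d₃)) := by
      apply mul_pos hlead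
      have e1 : ((d₁+1:ℤ):ℝ) - d₁ = 1 := by push_cast; ring
      rw [e1, one_mul]
      exact mul_pos_of_neg_of_neg (by linarith) (by linarith)
    rw [hkey] at hle'
    linarith
  · by_contra hne
    have h3' : d₃ + 1 ≤ (S:ℤ) := by omega
    have hle' := hle (d₃ + 1) (by omega) h3'
    have hkey := key ((d₃ + 1 : ℤ) : ℝ)
    have hpos : 0 < a * ((((d₃+1:ℤ):ℝ) - d₁) * (((d₃+1:ℤ):ℝ) - d₂) * (((d₃+1:ℤ):ℝ) - d₃)) := by
      apply mul_pos hlead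
      have hcast : ((d₃+1:ℤ):ℝ) = (d₃:ℝ) + 1 := by push_cast; ring
      rw [hcast]
      have : (d₁:ℝ) < d₃ := hd12.trans hd23
      apply mul_pos (mul_pos (by linarith) (by linarith)) (by linarith)
    rw [hkey] at hle'
    linarith
end
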